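/- Let x = (x_n)_{n≥2} and y = (y_n)_{n≥2} be sequences with x_n, y_n ∈ {1,…,n}, and suppose there is C ≥ 0 with |x_n − y_n| ≤ C for all n ≥ 2. Then the Hausdorff distance between N_x and N_y, computed in the metric space (ℝ², d), is at most C. -/

import Mathlib

noncomputable section

/-- The plane `ℝ²`, to be equipped with the tree metric. -/
structure TreePlane : Type where
  u : ℝ
  v : ℝ

namespace TreePlane

/-- The tree distance on `ℝ²`. -/
def tdist (p q : TreePlane) : ℝ :=
  if p.u = q.u then |p.v - q.v| else |p.v| + |p.u - q.u| + |q.v|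

theorem tdist_self (p : TreePlane) : tdist p p = 0 := by simp [tdist]

theorem tdist_comm (p q : TreePlane) : tdist p q = tdist q p := by
  unfold tdist
  rcases eq_or_ne p.u q.u with h | h
  · simp [h, abs_sub_comm]
  · simp [h, h.symm, abs_sub_comm]
    ring

theorem tdist_triangle (p q r : TreePlane) : tdist p r ≤ tdist p q + tdist q r := by
  unfold tdist
  rcases eq_or_ne p.u q.u with e1 | e1 <;> rcases eq_or_ne q.u r.u with e2 | e2 <;>
      rcases eq_or_ne p.u r.u with e3 | e3
  · rw [if_pos e1, if_pos e2, if_pos e3]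
    exact abs_sub_le _ _ _
  · exact absurd (e1.trans e2) e3
  · exact absurd (e1.symm.trans e3) e2
  · rw [if_pos e1, if_neg e2, if_neg e3, e1]
    have h1 : |p.v| ≤ |p.v - q.v| + |q.v| := by
      calc |p.v| = |p.v - q.v + q.v| := by ring_nf
        _ ≤ |p.v - q.v| + |q.v| := abs_add_le _ _
    linarith
  · exact absurd (e3.trans e2.symm) e1
  · rw [if_neg e1, if_pos e2, if_neg e3, e2]
    have h1 : |r.v| ≤ |q.v - r.v| + |q.v| := by
      calc |r.v| = |r.v - q.v + q.v| := by ring_nf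
        _ ≤ |r.v - q.v| + |q.v| := abs_add_le _ _
        _ = |q.v - r.v| + |q.v| := by rw [abs_sub_comm]
    linarith
  · rw [if_neg e1, if_neg e2, if_pos e3]
    have h1 : |p.v - r.v| ≤ |p.v| + |r.v| := abs_sub _ _
    have h2 := abs_nonneg (p.u - q.u)
    have h3 := abs_nonneg (q.u - r.u)
    have h4 := abs_nonneg q.v
    linarith
  · rw [if_neg e1, if_neg e2, if_neg e3]
    have h1 : |p.u - r.u| ≤ |p.u - q.u| + |q.u - r.u| := abs_sub_le _ _ _
    have h2 := abs_nonneg q.v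
    linarith

theorem tdist_eq_zero {p q : TreePlane} (h : tdist p q = 0) : p = q := by
  unfold tdist at h
  rcases eq_or_ne p.u q.u with e | e
  · rw [if_pos e] at h
    have hv : p.v = q.v := by
      have := abs_eq_zero.mp h
      linarith
    cases p; cases q; simp_all
  · rw [if_neg e] at h
    exfalso
    have h1 := abs_nonneg p.v
    have h2 := abs_nonneg q.v
    have h3 : 0 < |p.u - q.u| := abs_pos.mpr (sub_ne_zero.mpr e)
    linarith

noncomputable instance : MetricSpace TreePlane where
  dist := tdist
  dist_self := tdist_self
  dist_comm := tdist_comm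
  dist_triangle := tdist_triangle
  eq_of_dist_eq_zero := tdist_eq_zero

theorem dist_def (p q : TreePlane) : dist p q = tdist p q := rfl

end TreePlane

open TreePlane

/-- `∑_{i=2}^n e^{i²}`. -/
def expSum (n : ℕ) : ℝ := ∑ i ∈ Finset.Icc 2 n, Real.exp ((i : ℝ) ^ 2)

/-- `Q⁺_{x,n} = (∑_{i=2}^n e^{i²}, x_n)`. -/
def Qp (x : ℕ → ℕ) (n : ℕ) : TreePlane := ⟨expSum n, (x n : ℝ)⟩

/-- `Q⁻_{x,n} = (∑_{i=2}^n e^{i²}, −x_n)`. -/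
def Qm (x : ℕ → ℕ) (n : ℕ) : TreePlane := ⟨expSum n, -(x n : ℝ)⟩

/-- `N_x = ⋃_{n≥2} {Q⁺_{x,n}, Q⁻_{x,n}}`, as a subset of `(ℝ², treeDist)`. -/
def Nset (x : ℕ → ℕ) : Set TreePlane :=
  ⋃ n ∈ {m : ℕ | 2 ≤ m}, ({Qp x n, Qm x n} : Set TreePlane)

/-- `x = (x_n)_{n≥2}` is a sequence with `x_n ∈ {1,…,n}`. -/
def SeqOK (x : ℕ → ℕ) : Prop := ∀ n, 2 ≤ n → 1 ≤ x n ∧ x n ≤ n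

/-- If `|x_n − y_n| ≤ C` for all `n ≥ 2`, then the Hausdorff distance between
`N_x` and `N_y`, computed in the metric space `(ℝ², treeDist)`, is at most `C`. -/
theorem hausdorffDist_le_of_bounded_diff (x y : ℕ → ℕ) (hx : SeqOK x) (hy : SeqOK y)
    (C : ℝ) (hC : 0 ≤ C) (h : ∀ n, 2 ≤ n → |(x n : ℝ) - (y n : ℝ)| ≤ C) :
    EMetric.hausdorffEdist (Nset x) (Nset y) ≤ ENNReal.ofReal C := by
  have key : ∀ (a b : ℕ → ℕ), (∀ n, 2 ≤ n → |(a n : ℝ) - (b n : ℝ)| ≤ C) →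
      ∀ p ∈ Nset a, ∃ q ∈ Nset b, edist p q ≤ ENNReal.ofReal C := by
    intro a b hab p hp
    simp only [Nset, Set.mem_iUnion, Set.mem_setOf_eq] at hp
    obtain ⟨n, hn, hp⟩ := hp
    rcases hp with hp | hp
    · refine ⟨Qp b n, ?_, ?_⟩
      · simp only [Nset, Set.mem_iUnion, Set.mem_setOf_eq]
        exact ⟨n, hn, Or.inl rfl⟩
      · rw [hp, edist_dist, dist_def]
        apply ENNReal.ofReal_le_ofReal
        simp only [Qp, tdist, if_pos rfl]
        exact hab n hn
    · refine ⟨Qm b n, ?_, ?_⟩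
      · simp only [Nset, Set.mem_iUnion, Set.mem_setOf_eq]
        exact ⟨n, hn, Or.inr rfl⟩
      · rw [hp, edist_dist, dist_def]
        apply ENNReal.ofReal_le_ofReal
        simp only [Qm, tdist, if_pos rfl]
        calc |-(a n : ℝ) - -(b n : ℝ)| = |(a n : ℝ) - (b n : ℝ)| := by
              rw [← abs_neg]; ring_nf
          _ ≤ C := hab n hn
  refine EMetric.hausdorffEdist_le_of_mem_edist (key x y h) (key y x ?_)
  intro n hn
  rw [abs_sub_comm]; exact h n hn
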